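/- Under the Setup, for every n ∈ ℕ and every finite open cover α of X, the function ω ↦ D(α_0^{n-1}(ω|E)) from Ω to ℕ is F-measurable. -/

import Mathlib

open MeasureTheory Set Filter Topology
open scoped ENNReal

section Defs

variable {Ω X Y : Type*}

/-- The fiber of a set `E ⊆ Ω × X` over `ω`. -/
def fiber (E : Set (Ω × X)) (ω : Ω) : Set X := {x | (ω, x) ∈ E}

/-- The iterates `T^n_ω = T_{θ^{n-1}ω} ∘ ⋯ ∘ T_ω` of a bundle RDS. -/
def itr (T : Ω → X → X) (θ : Ω → Ω) : ℕ → Ω → X → X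
  | 0, _ => id
  | n + 1, ω => itr T θ n (θ ω) ∘ T ω

/-- Two families of sets with common index set are combinatorially equivalent if
the corresponding sub-intersections are simultaneously nonempty. -/
def CombEquiv {ι : Type*} (A B : ι → Set Y) : Prop :=
  ∀ J : Set ι, (⋂ i ∈ J, A i).Nonempty ↔ (⋂ i ∈ J, B i).Nonempty

section Top

variable [TopologicalSpace X] [TopologicalSpace Y]

/-- A family of open sets covering the whole space. -/
def IsOpenCover {ι : Type*} (U : ι → Set X) : Prop :=
  (∀ i, IsOpen (U i)) ∧ (⋃ i, U i) = univ

/-- A family of relatively open subsets of `K` covering `K`. -/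
def IsOpenCoverOn (K : Set X) {ι : Type*} (U : ι → Set X) : Prop :=
  (∀ i, ∃ V : Set X, IsOpen V ∧ U i = V ∩ K) ∧ K ⊆ ⋃ i, U i

/-- `1 + ord`: the maximal multiplicity `sup_{x ∈ K} Σ_i 1_{U i}(x)` of the family `U` on `K`. -/
noncomputable def multOn (K : Set X) {ι : Type*} [Fintype ι] (U : ι → Set X) : ℕ :=
  sSup {m | ∃ x ∈ K, m = Nat.card {i // x ∈ U i}}

/-- `ord(U) = -1 + sup_{x ∈ K} Σ_i 1_{U i}(x)` (as a truncated natural number). -/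
noncomputable def ordOn (K : Set X) {ι : Type*} [Fintype ι] (U : ι → Set X) : ℕ :=
  multOn K U - 1

/-- `V` refines `U` if every member of `V` is contained in some member of `U`. -/
def Refines {ι κ : Type*} (V : κ → Set X) (U : ι → Set X) : Prop :=
  ∀ j, ∃ i, V j ⊆ U i

/-- `D(U) = min { ord(V) : V a finite relatively open cover of K refining U }`. -/
noncomputable def DOn (K : Set X) {ι : Type*} [Fintype ι] (U : ι → Set X) : ℕ :=
  sInf {q | ∃ (m : ℕ) (V : Fin m → Set X),
    IsOpenCoverOn K V ∧ Refines V U ∧ ordOn K V = q}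

/-- `f : X → Y` is `U`-compatible if some finite open cover of `Y` pulls back to
a refinement of `U`. -/
def Compatible {ι : Type*} (U : ι → Set X) (f : X → Y) : Prop :=
  ∃ (m : ℕ) (W : Fin m → Set Y), IsOpenCover W ∧ Refines (fun j => f ⁻¹' (W j)) U

/-- The covering dimension `dim Y = sup { D(V) : V a finite open cover of Y }`. -/
noncomputable def covDim (Z : Type*) [TopologicalSpace Z] : ℕ∞ :=
  ⨆ (m : ℕ) (V : Fin m → Set Z) (_ : IsOpenCover V), (DOn (univ : Set Z) V : ℕ∞)

/-- The dynamical cover `α_0^{n-1}(ω|E) = ⋁_{i=0}^{n-1} (T^i_ω)⁻¹ α(θ^i ω|E)` of the fiber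
`E_ω`, indexed by `Fin n → ι`. -/
def dynCover (T : Ω → X → X) (θ : Ω → Ω) (E : Set (Ω × X)) {ι : Type*}
    (U : ι → Set X) (n : ℕ) (ω : Ω) : (Fin n → ι) → Set X :=
  fun j => fiber E ω ∩
    ⋂ i : Fin n, (itr T θ (i : ℕ) ω) ⁻¹' (U (j i) ∩ fiber E (θ^[(i : ℕ)] ω))

end Top

/-- `Σ_{i=0}^{n-1} 1_A (T^i_ω x)`: the number of times the orbit of `x` up to time `n`
visits `A`. -/
noncomputable def orbCount (T : Ω → X → X) (θ : Ω → Ω) (A : Set X)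
    (n : ℕ) (ω : Ω) (x : X) : ℕ :=
  Nat.card {i : Fin n // itr T θ (i : ℕ) ω x ∈ A}

/-- `b_n(ω) = sup_{x ∈ E_ω} Σ_{i=0}^{n-1} 1_A (T^i_ω x)`. -/
noncomputable def bsup (T : Ω → X → X) (θ : Ω → Ω) (E : Set (Ω × X)) (A : Set X)
    (n : ℕ) (ω : Ω) : ℕ :=
  sSup {m | ∃ x ∈ fiber E ω, m = orbCount T θ A n ω x}

/-- The `ω`-orbit capacity `ocap^ω(A) = lim_{n→∞} (1/n) b_n(ω)` (as a `limsup`). -/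
noncomputable def ocap (T : Ω → X → X) (θ : Ω → Ω) (E : Set (Ω × X)) (A : Set X)
    (ω : Ω) : ℝ :=
  Filter.atTop.limsup (fun n : ℕ => (bsup T θ E A n ω : ℝ) / n)

section Metric

variable [PseudoMetricSpace X]

/-- The Bowen-type metric `d^ω_{ε,n}(x,y) = max_{0 ≤ k < n} d(T^k_ω x, T^k_ω y)/ε`. -/
noncomputable def dBowen (T : Ω → X → X) (θ : Ω → Ω) (ε : ℝ) (n : ℕ) (ω : Ω)
    (x y : X) : ℝ :=
  ⨆ k : Fin n, dist (itr T θ (k : ℕ) ω x) (itr T θ (k : ℕ) ω y) / ε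

/-- The diameter of a set with respect to a (not necessarily standard) metric `ρ`. -/
noncomputable def diamIn (ρ : X → X → ℝ) (A : Set X) : ℝ :=
  sSup {r | ∃ x ∈ A, ∃ y ∈ A, r = ρ x y}

/-- `cov(ω,ε,n)`: the minimal cardinality of a cover of `E_ω` by sets of
`d^ω_{ε,n}`-diameter strictly less than 1. -/
noncomputable def covN (T : Ω → X → X) (θ : Ω → Ω) (E : Set (Ω × X))
    (ε : ℝ) (n : ℕ) (ω : Ω) : ℕ :=
  sInf {m | ∃ A : Fin m → Set X, fiber E ω ⊆ (⋃ j, A j) ∧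
    ∀ j, diamIn (dBowen T θ ε n ω) (A j) < 1}

/-- `sep(ω,ε,n)`: the maximal cardinality of a subset of `E_ω` whose distinct points are
at `d^ω_{ε,n}`-distance at least 1. -/
noncomputable def sepN (T : Ω → X → X) (θ : Ω → Ω) (E : Set (Ω × X))
    (ε : ℝ) (n : ℕ) (ω : Ω) : ℕ :=
  sSup {m | ∃ F : Finset X, (F : Set X) ⊆ fiber E ω ∧ F.card = m ∧
    ∀ x ∈ F, ∀ y ∈ F, x ≠ y → 1 ≤ dBowen T θ ε n ω x y}

/-- `S'(ω,ε) = limsup_{n→∞} (1/n) log sep(ω,ε,n)`. -/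
noncomputable def Ssep (T : Ω → X → X) (θ : Ω → Ω) (E : Set (Ω × X))
    (ω : Ω) (ε : ℝ) : ℝ :=
  Filter.atTop.limsup (fun n : ℕ => Real.log (sepN T θ E ε n ω) / n)

/-- `S(ω,ε) = lim_{n→∞} (1/n) log cov(ω,ε,n)` (the limit exists by subadditivity and
equals the `limsup`). -/
noncomputable def Scov (T : Ω → X → X) (θ : Ω → Ω) (E : Set (Ω × X))
    (ω : Ω) (ε : ℝ) : ℝ :=
  Filter.atTop.limsup (fun n : ℕ => Real.log (covN T θ E ε n ω) / n)

/-- The fiberwise metric mean dimension computed from separated sets: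
`liminf_{1 > ε → 0⁺} S'(ω,ε)/(-log ε)`. -/
noncomputable def mdimMfibSep (T : Ω → X → X) (θ : Ω → Ω) (E : Set (Ω × X)) (ω : Ω) : ℝ :=
  Filter.liminf (fun ε => Ssep T θ E ω ε / (-Real.log ε)) (nhdsWithin 0 (Ioo (0:ℝ) 1))

/-- The fiberwise metric mean dimension `mdim_M(T,ω) = liminf_{1 > ε → 0⁺} S(ω,ε)/(-log ε)`. -/
noncomputable def mdimMfibCov (T : Ω → X → X) (θ : Ω → Ω) (E : Set (Ω × X)) (ω : Ω) : ℝ :=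
  Filter.liminf (fun ε => Scov T θ E ω ε / (-Real.log ε)) (nhdsWithin 0 (Ioo (0:ℝ) 1))

/-- The topological entropy `h_top(T) = ∫_Ω sup_{0<ε<1} S'(ω,ε) dP(ω)`. -/
noncomputable def htop (T : Ω → X → X) (θ : Ω → Ω) (E : Set (Ω × X))
    {mΩ : MeasurableSpace Ω} (P : Measure Ω) : ℝ≥0∞ :=
  ∫⁻ ω, ⨆ ε : Ioo (0:ℝ) 1, ENNReal.ofReal (Ssep T θ E ω (ε : ℝ)) ∂P

end Metric

section Mdim

variable [TopologicalSpace X] {mΩ : MeasurableSpace Ω}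

/-- The mean topological dimension with respect to the cover `U`:
`mdim(T,α) = lim_{n→∞} (1/n) ∫_Ω D(α_0^{n-1}(ω|E)) dP(ω)` (the limit exists by
subadditivity and equals the `liminf`). -/
noncomputable def mdimCov (P : Measure Ω) (T : Ω → X → X) (θ : Ω → Ω) (E : Set (Ω × X))
    {ι : Type*} [Fintype ι] (U : ι → Set X) : ℝ≥0∞ :=
  Filter.atTop.liminf (fun n : ℕ =>
    (∫⁻ ω, (DOn (fiber E ω) (dynCover T θ E U n ω) : ℝ≥0∞) ∂P) / (n : ℝ≥0∞))

/-- The mean topological dimension `mdim(T) = sup_α mdim(T,α)` over finite open covers. -/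
noncomputable def mdim (P : Measure Ω) (T : Ω → X → X) (θ : Ω → Ω)
    (E : Set (Ω × X)) : ℝ≥0∞ :=
  ⨆ (m : ℕ) (U : Fin m → Set X) (_ : IsOpenCover U), mdimCov P T θ E U

end Mdim

end Defs


section ProjectionTheorem

theorem aux_choice {Y : Type*} [MeasurableSpace Y]
    (μ : Measure Y) [IsFiniteMeasure μ]
    {f : (ℕ → ℕ) → Y} {δ : ℝ≥0∞} (hδ : δ ≠ 0) :
    ∀ (Es : Set (ℕ → ℕ)) (k : ℕ), ∃ m : ℕ,
      μ (f '' Es) ≤ μ (f '' (Es ∩ {x | x k ≤ m})) + δ / 2 ^ (k + 1) := by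
  intro Es k
  have hmono : Monotone fun m : ℕ => f '' (Es ∩ {x | x k ≤ m}) := by
    intro a b hab
    exact image_mono (inter_subset_inter_right _ fun x hx => le_trans hx hab)
  have hsets : (⋃ m : ℕ, (Es ∩ {x | x k ≤ m})) = Es := by
    apply Subset.antisymm (iUnion_subset fun m => inter_subset_left)
    intro x hx
    exact mem_iUnion.mpr ⟨x k, hx, by simp⟩
  have hun : (⋃ m : ℕ, f '' (Es ∩ {x | x k ≤ m})) = f '' Es := by
    rw [← image_iUnion, hsets]
  have hsup : μ (f '' Es) = ⨆ m, μ (f '' (Es ∩ {x | x k ≤ m})) := by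
    rw [← hun, hmono.measure_iUnion]
  set S := μ (f '' Es) with hS
  have hδ' : δ / 2 ^ (k + 1) ≠ 0 := by
    rw [ne_eq, ENNReal.div_eq_zero_iff]
    push_neg
    exact ⟨hδ, by simp⟩
  by_cases h0 : S = 0
  · exact ⟨0, by rw [h0]; exact zero_le⟩
  have hlt : S - δ / 2 ^ (k + 1) < S :=
    ENNReal.sub_lt_self (measure_ne_top μ _) h0 hδ'
  obtain ⟨m, hm⟩ := lt_iSup_iff.mp (hlt.trans_eq hsup)
  exact ⟨m, tsub_le_iff_right.mp hm.le⟩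

theorem aux_inner_compact {Y : Type*} [TopologicalSpace Y] [T2Space Y]
    [FirstCountableTopology Y] [MeasurableSpace Y] [OpensMeasurableSpace Y]
    (μ : Measure Y) [IsFiniteMeasure μ]
    {f : (ℕ → ℕ) → Y} (hf : Continuous f) {δ : ℝ≥0∞} (hδ : δ ≠ 0) :
    ∃ K, IsCompact K ∧ K ⊆ range f ∧ μ (range f) ≤ μ K + δ := by
  choose m hm using aux_choice μ (f := f) hδ
  -- the decreasing sets
  set Es : ℕ → Set (ℕ → ℕ) := fun k => Nat.rec univ (fun k Ek => Ek ∩ {x | x k ≤ m Ek k}) k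
    with hEs
  set s : ℕ → ℕ := fun k => m (Es k) k with hs
  have hEsucc : ∀ k, Es (k + 1) = Es k ∩ {x | x k ≤ s k} := fun k => rfl
  have hEform : ∀ k, Es k = {x | ∀ i < k, x i ≤ s i} := by
    intro k
    induction k with
    | zero => simp [hEs]
    | succ k ih =>
      rw [hEsucc, ih]
      ext x
      simp only [mem_inter_iff, mem_setOf_eq, Nat.lt_succ_iff_lt_or_eq]
      constructor
      · rintro ⟨h1, h2⟩ i (hi | rfl)
        · exact h1 i hi
        · exact h2
      · intro h
        exact ⟨fun i hi => h i (Or.inl hi), h k (Or.inr rfl)⟩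
  have hEanti : Antitone Es := by
    apply antitone_nat_of_succ_le
    intro k
    rw [hEsucc]
    exact inter_subset_left
  -- measure bound along the scheme
  have hsum : ∀ k, ∑ i ∈ Finset.range k, δ / 2 ^ (i + 1) ≤ δ := by
    intro k
    have h1 : ∀ i : ℕ, δ / 2 ^ (i + 1) = δ * 2⁻¹ ^ (i + 1) := by
      intro i
      rw [div_eq_mul_inv, ENNReal.inv_pow]
    calc ∑ i ∈ Finset.range k, δ / 2 ^ (i + 1)
        ≤ ∑' i : ℕ, δ / 2 ^ (i + 1) := ENNReal.sum_le_tsum _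
      _ = δ * ∑' i : ℕ, 2⁻¹ ^ (i + 1) := by
          simp_rw [h1]; exact ENNReal.tsum_mul_left
      _ = δ * (2⁻¹ * ∑' i : ℕ, 2⁻¹ ^ i) := by
          congr 1
          simp_rw [pow_succ, mul_comm]
          exact ENNReal.tsum_mul_left
      _ = δ * (2⁻¹ * 2) := by
          rw [ENNReal.tsum_geometric]
          congr
          simp [ENNReal.one_sub_inv_two]
      _ ≤ δ := by
          rw [ENNReal.inv_mul_cancel (by norm_num) (by norm_num), mul_one]
  have hbound : ∀ k, μ (range f) ≤ μ (f '' Es k) + ∑ i ∈ Finset.range k, δ / 2 ^ (i + 1) := by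
    intro k
    induction k with
    | zero => simp [hEs, image_univ]
    | succ k ih =>
      calc μ (range f) ≤ μ (f '' Es k) + ∑ i ∈ Finset.range k, δ / 2 ^ (i + 1) := ih
        _ ≤ (μ (f '' Es (k + 1)) + δ / 2 ^ (k + 1)) + ∑ i ∈ Finset.range k, δ / 2 ^ (i + 1) := by
            gcongr
            exact hm (Es k) k
        _ = μ (f '' Es (k + 1)) + ∑ i ∈ Finset.range (k + 1), δ / 2 ^ (i + 1) := by
            rw [Finset.sum_range_succ]
            ring
  have hbound' : ∀ k, μ (range f) ≤ μ (closure (f '' Es k)) + δ := fun k =>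
    (hbound k).trans (add_le_add (measure_mono subset_closure) (hsum k))
  -- the compact set
  set Cs : Set (ℕ → ℕ) := {x | ∀ i, x i ≤ s i} with hCs
  have hCcomp : IsCompact Cs := by
    have : Cs = Set.pi univ fun i => Iic (s i) := by
      ext x; simp [hCs, Set.mem_pi, Pi.le_def]
    rw [this]
    exact isCompact_univ_pi fun i => (Set.finite_Iic (s i)).isCompact
  refine ⟨f '' Cs, hCcomp.image hf, image_subset_range _ _, ?_⟩
  -- f '' Cs = ⋂ k, closure (f '' Es k)
  have hKeq : f '' Cs = ⋂ k, closure (f '' Es k) := by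
    apply Subset.antisymm
    · apply subset_iInter
      intro k
      refine (image_mono ?_).trans subset_closure
      rw [hEform]
      intro x hx i _
      exact hx i
    · intro y hy
      obtain ⟨V, hV⟩ := (𝓝 y).exists_antitone_basis
      have hpick : ∀ k, ∃ x, x ∈ Es k ∧ f x ∈ V k := by
        intro k
        have hyk : y ∈ closure (f '' Es k) := mem_iInter.mp hy k
        rcases mem_closure_iff_nhds.mp hyk (V k) (hV.mem k) with ⟨z, hzV, x, hxE, rfl⟩
        exact ⟨x, hxE, hzV⟩
      choose x hxE hxV using hpick
      -- a compact set containing all the x k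
      set B : ℕ → ℕ := fun i => max (s i) (Finset.sup (Finset.range (i + 1)) fun k => x k i)
        with hB
      have hxQ : ∀ k, x k ∈ Set.pi univ fun i => Iic (B i) := by
        intro k
        intro i _
        simp only [mem_Iic, hB]
        rcases le_or_gt k i with hki | hik
        · exact le_max_of_le_right (Finset.le_sup (f := fun k => x k i) (Finset.mem_range.mpr (Nat.lt_succ_of_le hki)))
        · have := (hEform k ▸ hxE k)
          exact le_max_of_le_left (this i hik)
      have hQcomp : IsCompact (Set.pi univ fun i => Iic (B i)) :=
        isCompact_univ_pi fun i => (Set.finite_Iic (B i)).isCompact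
      obtain ⟨xl, hxlQ, φ, hφ, hconv⟩ := hQcomp.tendsto_subseq hxQ
      have hxlC : xl ∈ Cs := by
        intro i
        have hci : Tendsto (fun j => x (φ j) i) atTop (𝓝 (xl i)) :=
          ((continuous_apply i).continuousAt.tendsto).comp hconv
        have hev : ∀ᶠ j in atTop, x (φ j) i = xl i :=
          hci ((isOpen_discrete {xl i}).mem_nhds rfl)
        have hev2 : ∀ᶠ j in atTop, i < φ j :=
          eventually_atTop.mpr ⟨i + 1, fun j hj => lt_of_lt_of_le (Nat.lt_of_succ_le hj) (hφ.le_apply)⟩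
        rcases (hev.and hev2).exists with ⟨j, hj1, hj2⟩
        rw [← hj1]
        exact (hEform (φ j) ▸ hxE (φ j)) i hj2
      have h1 : Tendsto (fun j => f (x (φ j))) atTop (𝓝 (f xl)) :=
        (hf.continuousAt.tendsto).comp hconv
      have h2 : Tendsto (fun k => f (x k)) atTop (𝓝 y) := hV.tendsto hxV
      have h3 : Tendsto (fun j => f (x (φ j))) atTop (𝓝 y) := h2.comp hφ.tendsto_atTop
      exact ⟨xl, hxlC, tendsto_nhds_unique h1 h3⟩
  -- conclude
  have hclosedmeas : ∀ k, NullMeasurableSet (closure (f '' Es k)) μ :=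
    fun k => (isClosed_closure.measurableSet).nullMeasurableSet
  have hiInf : μ (f '' Cs) = ⨅ k, μ (closure (f '' Es k)) := by
    rw [hKeq]
    refine Antitone.measure_iInter ?_ hclosedmeas ⟨0, measure_ne_top μ _⟩
    intro a b hab
    exact closure_mono (image_mono (hEanti hab))
  rw [hiInf, ENNReal.iInf_add]
  exact le_iInf fun k => hbound' k

theorem aux_analytic_nullmeas {Y : Type*} [TopologicalSpace Y] [T2Space Y]
    [FirstCountableTopology Y] [MeasurableSpace Y] [OpensMeasurableSpace Y]
    (μ : Measure Y) [IsFiniteMeasure μ] {A : Set Y} (hA : AnalyticSet A) :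
    ∃ B N : Set Y, MeasurableSet B ∧ B ⊆ A ∧ A \ B ⊆ N ∧ MeasurableSet N ∧ μ N = 0 := by
  rw [AnalyticSet] at hA
  rcases hA with rfl | ⟨f, hf, rfl⟩
  · exact ⟨∅, ∅, MeasurableSet.empty, Subset.rfl, by simp, MeasurableSet.empty, measure_empty⟩
  have hK : ∀ k : ℕ, ∃ K, IsCompact K ∧ K ⊆ range f ∧
      μ (range f) ≤ μ K + ((k : ℝ≥0∞) + 1)⁻¹ := by
    intro k
    exact aux_inner_compact μ hf (by simp)
  choose K hKc hKsub hKle using hK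
  refine ⟨⋃ k, K k, toMeasurable μ (range f) \ ⋃ k, K k,
    MeasurableSet.iUnion fun k => ((hKc k).isClosed).measurableSet,
    iUnion_subset hKsub, ?_, ?_, ?_⟩
  · exact diff_subset_diff_left (subset_toMeasurable μ _)
  · exact (measurableSet_toMeasurable μ _).diff
      (MeasurableSet.iUnion fun k => ((hKc k).isClosed).measurableSet)
  · have h0 : Tendsto (fun k : ℕ => ((k : ℝ≥0∞) + 1)⁻¹) atTop (𝓝 0) := by
      have h1 := ENNReal.tendsto_inv_nat_nhds_zero.comp (tendsto_add_atTop_nat 1)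
      apply h1.congr
      intro k
      simp [Function.comp]
    have hBle : μ (range f) ≤ μ (⋃ k, K k) := by
      have hten : Tendsto (fun k : ℕ => μ (⋃ k, K k) + ((k : ℝ≥0∞) + 1)⁻¹) atTop
          (𝓝 (μ (⋃ k, K k) + 0)) := Tendsto.add tendsto_const_nhds h0
      rw [add_zero] at hten
      refine ge_of_tendsto' hten fun k => ?_
      exact (hKle k).trans (add_le_add_left (measure_mono (subset_iUnion K k)) _)
    have hEq : μ (⋃ k, K k) = μ (range f) :=
      le_antisymm (measure_mono (iUnion_subset hKsub)) hBle
    rw [measure_diff (iUnion_subset fun k => (hKsub k).trans (subset_toMeasurable μ _))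
      ((MeasurableSet.iUnion fun k => ((hKc k).isClosed).measurableSet).nullMeasurableSet)
      (measure_ne_top μ _), measure_toMeasurable, hEq, tsub_self]


theorem aux_lift {Ω X : Type*} [MeasurableSpace Ω] [MeasurableSpace X]
    {M : Set (Ω × X)} (hM : MeasurableSet M) :
    ∃ φ : Ω → ℕ → Bool, Measurable φ ∧ ∃ M' : Set ((ℕ → Bool) × X),
      MeasurableSet M' ∧ M = (fun p : Ω × X => (φ p.1, p.2)) ⁻¹' M' := by
  classical
  set Lifts : Set (Ω × X) → Prop := fun M => ∃ φ : Ω → ℕ → Bool, Measurable φ ∧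
    ∃ M' : Set ((ℕ → Bool) × X), MeasurableSet M' ∧
      M = (fun p : Ω × X => (φ p.1, p.2)) ⁻¹' M' with hLifts
  have hempty : Lifts ∅ := ⟨fun _ _ => false, measurable_const, ∅, .empty, by simp⟩
  have hcompl : ∀ s, Lifts s → Lifts sᶜ := by
    rintro s ⟨φ, hφ, M', hM', rfl⟩
    exact ⟨φ, hφ, M'ᶜ, hM'.compl, by rw [preimage_compl]⟩
  have hunion : ∀ g : ℕ → Set (Ω × X), (∀ k, Lifts (g k)) → Lifts (⋃ k, g k) := by
    intro g hg
    choose φs hφs Ms hMs heq using hg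
    refine ⟨fun ω j => φs j.unpair.1 ω j.unpair.2,
      measurable_pi_lambda _ fun j => (measurable_pi_apply _).comp (hφs _),
      ⋃ k, (fun q : (ℕ → Bool) × X => (fun i => q.1 (Nat.pair k i), q.2)) ⁻¹' Ms k,
      MeasurableSet.iUnion fun k => (((measurable_pi_lambda _ fun i =>
        measurable_pi_apply (Nat.pair k i)).comp measurable_fst).prodMk
        measurable_snd) (hMs k), ?_⟩
    rw [preimage_iUnion]
    refine iUnion_congr fun k => ?_
    rw [heq k]
    ext p
    simp [Nat.unpair_pair]
  set m' : MeasurableSpace (Ω × X) :=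
    { MeasurableSet' := Lifts
      measurableSet_empty := hempty
      measurableSet_compl := hcompl
      measurableSet_iUnion := hunion } with hm'
  have hle : (Prod.instMeasurableSpace : MeasurableSpace (Ω × X)) ≤ m' := by
    apply sup_le
    · rintro s ⟨t, ht, rfl⟩
      refine ⟨fun ω _ => if ω ∈ t then true else false,
        measurable_pi_lambda _ fun _ => Measurable.ite ht measurable_const measurable_const,
        (fun q : (ℕ → Bool) × X => q.1 0) ⁻¹' {true},
        ((measurable_pi_apply 0).comp measurable_fst) (measurableSet_singleton true), ?_⟩
      ext p
      by_cases hp : p.1 ∈ t <;> simp [hp]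
    · rintro s ⟨t, ht, rfl⟩
      exact ⟨fun _ _ => false, measurable_const, Prod.snd ⁻¹' t, measurable_snd ht, rfl⟩
  exact hle M hM

/-- The measurable projection theorem. -/
theorem aux_proj {Ω X : Type*} [MeasurableSpace Ω] [TopologicalSpace X] [PolishSpace X]
    [MeasurableSpace X] [BorelSpace X]
    (P : Measure Ω) [IsFiniteMeasure P] [P.IsComplete] {M : Set (Ω × X)}
    (hM : MeasurableSet M) : MeasurableSet {ω | ∃ x, (ω, x) ∈ M} := by
  obtain ⟨φ, hφ, M', hM', rfl⟩ := aux_lift hM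
  haveI : PolishSpace (ℕ → Bool) := {}
  have hA : AnalyticSet (Prod.fst '' M') :=
    hM'.analyticSet.image_of_continuous continuous_fst
  set μ : Measure (ℕ → Bool) := P.map φ with hμ
  haveI : IsFiniteMeasure μ := by
    constructor
    rw [hμ, Measure.map_apply hφ MeasurableSet.univ]
    exact measure_lt_top P _
  obtain ⟨B, N, hB, hBA, hABN, hN, hN0⟩ := aux_analytic_nullmeas μ hA
  have hset : {ω | ∃ x, (ω, x) ∈ (fun p : Ω × X => (φ p.1, p.2)) ⁻¹' M'} =
      φ ⁻¹' (Prod.fst '' M') := by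
    ext ω
    simp only [mem_setOf_eq, mem_preimage, mem_image]
    constructor
    · rintro ⟨x, hx⟩
      exact ⟨(φ ω, x), hx, rfl⟩
    · rintro ⟨⟨c, x⟩, hcx, hc⟩
      exact ⟨x, by rwa [show φ ω = c from hc.symm ▸ rfl] ⟩
  rw [hset]
  have hsplit : φ ⁻¹' (Prod.fst '' M') = φ ⁻¹' B ∪ φ ⁻¹' (Prod.fst '' M' \ B) := by
    rw [← preimage_union, union_diff_cancel hBA]
  rw [hsplit]
  refine (hφ hB).union ?_
  apply measurableSet_of_null (μ := P)
  apply measure_mono_null (preimage_mono hABN)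
  rw [← Measure.map_apply hφ hN]
  exact hN0

end ProjectionTheorem

section Claims
variable {X : Type*} [TopologicalSpace X]

theorem aux_DOn_le {K : Set X} (hKne : K.Nonempty) {ι : Type*} [Fintype ι]
    {D : ι → Set X} {q m : ℕ} (O : Fin m → Set X) (hOopen : ∀ j, IsOpen (O j))
    (t : Fin m → ι) (hcov : K ⊆ ⋃ j, O j) (href : ∀ j, O j ∩ K ⊆ D (t j))
    (hord : ∀ x ∈ K, Nat.card {j // x ∈ O j} ≤ q + 1) :
    DOn K D ≤ q := by
  classical
  set V : Fin m → Set X := fun j => O j ∩ K with hV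
  have hVcov : IsOpenCoverOn K V := by
    constructor
    · exact fun j => ⟨O j, hOopen j, rfl⟩
    · intro x hx
      rcases mem_iUnion.mp (hcov hx) with ⟨j, hj⟩
      exact mem_iUnion.mpr ⟨j, hj, hx⟩
  have hVref : Refines V D := fun j => ⟨t j, href j⟩
  have hmult : multOn K V ≤ q + 1 := by
    apply csSup_le
    · exact ⟨Nat.card {j // hKne.some ∈ V j}, hKne.some, hKne.some_mem, rfl⟩
    · rintro r ⟨x, hx, rfl⟩
      calc Nat.card {j // x ∈ V j} ≤ Nat.card {j // x ∈ O j} := by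
            rw [Nat.card_eq_fintype_card, Nat.card_eq_fintype_card]
            exact Fintype.card_subtype_mono _ _ fun j hj => hj.1
        _ ≤ q + 1 := hord x hx
  have hordle : ordOn K V ≤ q := by
    rw [ordOn]
    omega
  exact le_trans (Nat.sInf_le ⟨m, V, hVcov, hVref, rfl⟩) hordle

theorem aux_le_DOn {K : Set X} (hKcp : IsCompact K) {ι : Type*} [Fintype ι]
    {D : ι → Set X} (hDopen : ∀ a, ∃ W, IsOpen W ∧ D a = W ∩ K)
    (hDcov : K ⊆ ⋃ a, D a) {b : ℕ → Set X} (hbopen : ∀ k, IsOpen (b k))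
    (hbasis : ∀ W, IsOpen W → ∀ x ∈ W, ∃ k, x ∈ b k ∧ b k ⊆ W) {q : ℕ}
    (hq : DOn K D ≤ q) :
    ∃ (m : ℕ) (F : Fin m → Finset ℕ) (tg : Fin m → ι),
      (K ⊆ ⋃ j, ⋃ k ∈ F j, b k) ∧ (∀ j, (⋃ k ∈ F j, b k) ∩ K ⊆ D (tg j)) ∧
      (∀ x ∈ K, Nat.card {j // x ∈ ⋃ k ∈ F j, b k} ≤ q + 1) := by
  classical
  rcases eq_empty_or_nonempty K with rfl | hKne
  · exact ⟨0, fun j => ∅, fun j => j.elim0, by simp, fun j => j.elim0, by simp⟩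
  -- the defining set of DOn is nonempty: D itself, reindexed, is a witness
  set e : Fin (Fintype.card ι) ≃ ι := (Fintype.equivFin ι).symm with he
  have hSne : {r | ∃ (m : ℕ) (V : Fin m → Set X),
      IsOpenCoverOn K V ∧ Refines V D ∧ ordOn K V = r}.Nonempty := by
    refine ⟨ordOn K (fun j => D (e j)), Fintype.card ι, fun j => D (e j), ?_, ?_, rfl⟩
    · constructor
      · exact fun j => hDopen (e j)
      · intro x hx
        rcases mem_iUnion.mp (hDcov hx) with ⟨a, ha⟩
        exact mem_iUnion.mpr ⟨e.symm a, by rwa [e.apply_symm_apply]⟩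
    · exact fun j => ⟨e j, Subset.rfl⟩
  have hmem := Nat.sInf_mem hSne
  rw [show sInf {r | ∃ (m : ℕ) (V : Fin m → Set X),
      IsOpenCoverOn K V ∧ Refines V D ∧ ordOn K V = r} = DOn K D from rfl] at hmem
  obtain ⟨m, V, hVcov, hVref, hVord⟩ := hmem
  choose W hWopen hVW using hVcov.1
  choose tgt htgt using hVref
  -- for each x in K, pick a basic set around x inside some W j
  have hpick : ∀ x : X, x ∈ K → ∃ (k : ℕ) (j : Fin m), x ∈ b k ∧ b k ⊆ W j := by
    intro x hx
    rcases mem_iUnion.mp (hVcov.2 hx) with ⟨j, hj⟩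
    have hxW : x ∈ W j := by rw [hVW j] at hj; exact hj.1
    rcases hbasis (W j) (hWopen j) x hxW with ⟨k, hk1, hk2⟩
    exact ⟨k, j, hk1, hk2⟩
  have hjne : Nonempty (Fin m) := by
    obtain ⟨j0, -⟩ := mem_iUnion.mp (hVcov.2 hKne.some_mem)
    exact ⟨j0⟩
  choose! k j hkx hkW using hpick
  -- compact: finitely many basic sets suffice
  obtain ⟨tt, htt⟩ := hKcp.elim_finite_subcover (ι := ↥K) (fun x => b (k ↑x))
    (fun x => hbopen _)
    (fun x hx => mem_iUnion.mpr ⟨⟨x, hx⟩, hkx x hx⟩)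
  set kk : ↥K → ℕ := fun x => k ↑x with hkk
  set jf : ↥K → Fin m := fun x => j ↑x with hjf
  set F : Fin m → Finset ℕ :=
    fun r => (tt.filter (fun x => jf x = r)).image kk with hF
  have hFW : ∀ r, ∀ κ ∈ F r, b κ ⊆ W r := by
    intro r κ hκ
    rw [hF] at hκ
    obtain ⟨x, hxf, rfl⟩ := Finset.mem_image.mp hκ
    obtain ⟨hxt, hxj⟩ := Finset.mem_filter.mp hxf
    rw [← hxj]
    exact hkW ↑x x.2
  refine ⟨m, F, tgt, ?_, ?_, ?_⟩
  · intro x hx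
    rcases mem_iUnion₂.mp (htt hx) with ⟨y, hyt, hyb⟩
    refine mem_iUnion.mpr ⟨jf y, mem_iUnion₂.mpr ⟨kk y, ?_, hyb⟩⟩
    rw [hF]
    exact Finset.mem_image.mpr ⟨y, Finset.mem_filter.mpr ⟨hyt, rfl⟩, rfl⟩
  · intro jj
    intro x hx
    rcases mem_iUnion₂.mp hx.1 with ⟨κ, hκF, hκb⟩
    have hxV : x ∈ V jj := by
      rw [hVW jj]
      exact ⟨hFW jj κ hκF hκb, hx.2⟩
    exact htgt jj hxV
  · intro x hx
    have h1 : Nat.card {jj // x ∈ ⋃ κ ∈ F jj, b κ} ≤ Nat.card {jj // x ∈ V jj} := by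
      rw [Nat.card_eq_fintype_card, Nat.card_eq_fintype_card]
      apply Fintype.card_subtype_mono
      intro jj hjj
      rcases mem_iUnion₂.mp hjj with ⟨κ, hκF, hκb⟩
      rw [hVW jj]
      exact ⟨hFW jj κ hκF hκb, hx⟩
    have h2 : Nat.card {jj // x ∈ V jj} ≤ multOn K V := by
      apply le_csSup
      · refine ⟨m, ?_⟩
        rintro r ⟨y, hy, rfl⟩
        rw [Nat.card_eq_fintype_card]
        calc Fintype.card {jj // y ∈ V jj} ≤ Fintype.card (Fin m) :=
              Fintype.card_subtype_le _
          _ = m := Fintype.card_fin m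
      · exact ⟨x, hx, rfl⟩
    have h3 : multOn K V ≤ q + 1 := by
      have : ordOn K V ≤ q := hVord.le.trans hq
      rw [ordOn] at this
      omega
    omega

theorem aux_itr_succ {Ω : Type*} {X : Type*} (T : Ω → X → X) (θ : Ω → Ω) :
    ∀ (i : ℕ) (ω : Ω), itr T θ (i + 1) ω = T (θ^[i] ω) ∘ itr T θ i ω := by
  intro i
  induction i with
  | zero => intro ω; rfl
  | succ i ih =>
    intro ω
    show itr T θ (i + 1) (θ ω) ∘ T ω = _
    rw [ih (θ ω)]
    rw [show θ^[i] (θ ω) = θ^[i + 1] ω from (Function.iterate_succ_apply θ i ω).symm]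
    rfl

theorem aux_itr_measurable {Ω : Type*} {X : Type*} [MeasurableSpace Ω] [MeasurableSpace X]
    {T : Ω → X → X} {θ : Ω → Ω} (hθ : Measurable θ)
    (hTm : Measurable fun p : Ω × X => T p.1 p.2) (i : ℕ) :
    Measurable fun p : Ω × X => itr T θ i p.1 p.2 := by
  induction i with
  | zero => exact measurable_snd
  | succ i ih =>
    have : (fun p : Ω × X => itr T θ (i + 1) p.1 p.2) =
        (fun p : Ω × X => itr T θ i p.1 p.2) ∘ (fun p : Ω × X => (θ p.1, T p.1 p.2)) := rfl
    rw [this]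
    exact ih.comp ((hθ.comp measurable_fst).prodMk hTm)

section GoodOmega

variable {Ω : Type*} {X : Type*} [TopologicalSpace X]
  {T : Ω → X → X} {θ : Ω → Ω} {E : Set (Ω × X)} {ω : Ω}

theorem aux_itr_mapsTo
    (hmap : ∀ i : ℕ, MapsTo (T (θ^[i] ω)) (fiber E (θ^[i] ω)) (fiber E (θ (θ^[i] ω))))
    (i : ℕ) : MapsTo (itr T θ i ω) (fiber E ω) (fiber E (θ^[i] ω)) := by
  induction i with
  | zero => exact fun x hx => hx
  | succ i ih =>
    rw [aux_itr_succ]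
    rw [Function.iterate_succ_apply']
    exact (hmap i).comp ih

theorem aux_itr_continuousOn
    (hmap : ∀ i : ℕ, MapsTo (T (θ^[i] ω)) (fiber E (θ^[i] ω)) (fiber E (θ (θ^[i] ω))))
    (hcont : ∀ i : ℕ, ContinuousOn (T (θ^[i] ω)) (fiber E (θ^[i] ω)))
    (i : ℕ) : ContinuousOn (itr T θ i ω) (fiber E ω) := by
  induction i with
  | zero => exact continuousOn_id
  | succ i ih =>
    rw [aux_itr_succ]
    exact (hcont i).comp ih (aux_itr_mapsTo hmap i)

theorem aux_dynCover_eq {ι : Type*} {U : ι → Set X} {n : ℕ}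
    (hmap : ∀ i : ℕ, MapsTo (T (θ^[i] ω)) (fiber E (θ^[i] ω)) (fiber E (θ (θ^[i] ω))))
    (a : Fin n → ι) :
    dynCover T θ E U n ω a = fiber E ω ∩ ⋂ i : Fin n, (itr T θ (i : ℕ) ω) ⁻¹' (U (a i)) := by
  ext x
  simp only [dynCover, mem_inter_iff, mem_iInter, mem_preimage, mem_inter_iff]
  constructor
  · rintro ⟨hxE, h⟩
    exact ⟨hxE, fun i => (h i).1⟩
  · rintro ⟨hxE, h⟩
    exact ⟨hxE, fun i => ⟨h i, aux_itr_mapsTo hmap (i : ℕ) hxE⟩⟩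

theorem aux_dynCover_relopen {ι : Type*} {U : ι → Set X} (hUopen : ∀ i, IsOpen (U i)) {n : ℕ}
    (hmap : ∀ i : ℕ, MapsTo (T (θ^[i] ω)) (fiber E (θ^[i] ω)) (fiber E (θ (θ^[i] ω))))
    (hcont : ∀ i : ℕ, ContinuousOn (T (θ^[i] ω)) (fiber E (θ^[i] ω)))
    (a : Fin n → ι) :
    ∃ W, IsOpen W ∧ dynCover T θ E U n ω a = W ∩ fiber E ω := by
  have hchoice : ∀ i : Fin n, ∃ u, IsOpen u ∧
      (itr T θ (i : ℕ) ω) ⁻¹' (U (a i)) ∩ fiber E ω = u ∩ fiber E ω := fun i =>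
    continuousOn_iff'.mp (aux_itr_continuousOn hmap hcont (i : ℕ)) (U (a i)) (hUopen (a i))
  choose u hu hueq using hchoice
  refine ⟨⋂ i, u i, isOpen_iInter_of_finite hu, ?_⟩
  rw [aux_dynCover_eq hmap]
  ext x
  simp only [mem_inter_iff, mem_iInter, mem_preimage]
  constructor
  · rintro ⟨hxE, h⟩
    refine ⟨fun i => ?_, hxE⟩
    have : x ∈ (itr T θ (i : ℕ) ω) ⁻¹' (U (a i)) ∩ fiber E ω := ⟨h i, hxE⟩
    rw [hueq i] at this
    exact this.1
  · rintro ⟨h, hxE⟩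
    refine ⟨hxE, fun i => ?_⟩
    have : x ∈ u i ∩ fiber E ω := ⟨h i, hxE⟩
    rw [← hueq i] at this
    exact this.1

theorem aux_dynCover_covers {ι : Type*} {U : ι → Set X} (hU : IsOpenCover U)
    (hmap : ∀ i : ℕ, MapsTo (T (θ^[i] ω)) (fiber E (θ^[i] ω)) (fiber E (θ (θ^[i] ω))))
    {n : ℕ} :
    fiber E ω ⊆ ⋃ a : Fin n → ι, dynCover T θ E U n ω a := by
  intro x hx
  have hchoice : ∀ i : Fin n, ∃ t : ι, itr T θ (i : ℕ) ω x ∈ U t := by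
    intro i
    have : itr T θ (i : ℕ) ω x ∈ ⋃ t, U t := by rw [hU.2]; trivial
    exact mem_iUnion.mp this
  choose a ha using hchoice
  refine mem_iUnion.mpr ⟨a, hx, mem_iInter.mpr fun i => ?_⟩
  exact mem_preimage.mpr ⟨ha i, aux_itr_mapsTo hmap (i : ℕ) hx⟩

end GoodOmega

end Claims

theorem stmt1
    {Ω X : Type*} [MeasurableSpace Ω]
    (P : MeasureTheory.Measure Ω) [MeasureTheory.IsProbabilityMeasure P] [P.IsComplete]
    [MetricSpace X] [CompactSpace X] [MeasurableSpace X] [BorelSpace X]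
    (θ : Ω → Ω) (hθ : MeasureTheory.MeasurePreserving θ P P)
    (E : Set (Ω × X)) (hE : MeasurableSet E)
    (hEne : ∀ ω, (fiber E ω).Nonempty) (hEcp : ∀ ω, IsCompact (fiber E ω))
    (T : Ω → X → X) (hTm : Measurable fun p : Ω × X => T p.1 p.2)
    (hTmap : ∀ᵐ ω ∂P, Set.MapsTo (T ω) (fiber E ω) (fiber E (θ ω)))
    (hTc : ∀ᵐ ω ∂P, ContinuousOn (T ω) (fiber E ω))
    (n : ℕ) {l : ℕ} (U : Fin l → Set X) (hU : IsOpenCover U) :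
    Measurable fun ω => DOn (fiber E ω) (dynCover T θ E U n ω) := by
  classical
  rcases isEmpty_or_nonempty Ω with hΩ | hΩ
  · intro s _
    rw [Set.eq_empty_of_isEmpty ((fun ω => DOn (fiber E ω) (dynCover T θ E U n ω)) ⁻¹' s)]
    exact MeasurableSet.empty
  haveI : Nonempty X := ⟨(hEne (Classical.arbitrary Ω)).some⟩
  haveI : TopologicalSpace.SeparableSpace X :=
    TopologicalSpace.isSeparable_univ_iff.mp isCompact_univ.isSeparable
  haveI : SecondCountableTopology X := UniformSpace.secondCountable_of_separable X
  -- a countable basis of X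
  obtain ⟨Bs, hBsc, hBsne, hBsb⟩ := TopologicalSpace.exists_countable_basis X
  have hBsnonempty : Bs.Nonempty := by
    by_contra h
    rw [not_nonempty_iff_eq_empty] at h
    have h2 := hBsb.sUnion_eq
    rw [h, sUnion_empty] at h2
    exact (univ_nonempty (α := X)).ne_empty h2.symm
  obtain ⟨bf, hbf⟩ := (Set.countable_iff_exists_surjective hBsnonempty).mp hBsc
  set b : ℕ → Set X := fun k => (bf k : Set X) with hb
  have hbopen : ∀ k, IsOpen (b k) := fun k => hBsb.isOpen (bf k).2
  have hbasis : ∀ W, IsOpen W → ∀ x ∈ W, ∃ k, x ∈ b k ∧ b k ⊆ W := by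
    intro W hW x hx
    obtain ⟨s, hsB, hxs, hsW⟩ := hBsb.exists_subset_of_mem_open hx hW
    obtain ⟨k, hk⟩ := hbf ⟨s, hsB⟩
    refine ⟨k, ?_, ?_⟩
    · rw [hb]; show x ∈ (bf k : Set X); rw [hk]; exact hxs
    · rw [hb]; show (bf k : Set X) ⊆ W; rw [hk]; exact hsW
  -- measurability preliminaries
  have hθm : Measurable θ := hθ.measurable
  have hfibergraph : ∀ i : ℕ,
      MeasurableSet {p : Ω × X | (θ^[i] p.1, itr T θ i p.1 p.2) ∈ E} := fun i =>
    (((hθm.iterate i).comp measurable_fst).prodMk (aux_itr_measurable hθm hTm i)) hE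
  have hDC : ∀ a : Fin n → Fin l,
      MeasurableSet {p : Ω × X | p.2 ∈ dynCover T θ E U n p.1 a} := by
    intro a
    have heq : {p : Ω × X | p.2 ∈ dynCover T θ E U n p.1 a} =
        E ∩ ⋂ i : Fin n, (((fun p : Ω × X => itr T θ (i : ℕ) p.1 p.2) ⁻¹' (U (a i))) ∩
          {p : Ω × X | (θ^[(i : ℕ)] p.1, itr T θ (i : ℕ) p.1 p.2) ∈ E}) := by
      ext p
      simp only [dynCover, fiber, mem_setOf_eq, mem_inter_iff, mem_iInter, mem_preimage,
        Prod.mk.eta]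
    rw [heq]
    exact hE.inter (MeasurableSet.iInter fun i =>
      ((aux_itr_measurable hθm hTm (i : ℕ)) (hU.1 (a i)).measurableSet).inter
        (hfibergraph (i : ℕ)))
  have hprojc : ∀ M : Set (Ω × X), MeasurableSet M →
      MeasurableSet {ω | fiber M ω = ∅} := by
    intro M hM
    have heq : {ω | fiber M ω = ∅} = {ω | ∃ x, (ω, x) ∈ M}ᶜ := by
      ext ω
      simp only [mem_setOf_eq, mem_compl_iff, eq_empty_iff_forall_notMem, not_exists]
      rfl
    rw [heq]
    exact (aux_proj P hM).compl
  -- the countable data and the three conditions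
  have hOopen : ∀ (F : Finset ℕ), IsOpen (⋃ k ∈ F, b k) := fun F =>
    isOpen_biUnion fun k _ => hbopen k
  set Cov : (Σ m : ℕ, (Fin m → Finset ℕ) × (Fin m → Fin n → Fin l)) → Set Ω :=
    fun c => {ω | fiber E ω ⊆ ⋃ j, ⋃ k ∈ c.2.1 j, b k} with hCov
  set Ref : (Σ m : ℕ, (Fin m → Finset ℕ) × (Fin m → Fin n → Fin l)) → Set Ω :=
    fun c => {ω | ∀ j, (⋃ k ∈ c.2.1 j, b k) ∩ fiber E ω ⊆
      dynCover T θ E U n ω (c.2.2 j)} with hRef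
  set Ord : (Σ m : ℕ, (Fin m → Finset ℕ) × (Fin m → Fin n → Fin l)) → ℕ → Set Ω :=
    fun c q => {ω | ∀ x ∈ fiber E ω,
      Nat.card {j // x ∈ ⋃ k ∈ c.2.1 j, b k} ≤ q + 1} with hOrd
  have hCovm : ∀ c, MeasurableSet (Cov c) := by
    intro c
    have heq : Cov c =
        {ω | fiber (E ∩ Prod.snd ⁻¹' (⋃ j, ⋃ k ∈ c.2.1 j, b k)ᶜ) ω = ∅} := by
      ext ω
      rw [hCov]
      simp only [mem_setOf_eq, eq_empty_iff_forall_notMem]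
      constructor
      · rintro h x ⟨hxE, hxO⟩
        exact hxO (h hxE)
      · intro h x hx
        by_contra hxO
        exact h x ⟨hx, hxO⟩
    rw [heq]
    exact hprojc _ (hE.inter (measurable_snd
      (isOpen_iUnion fun j => hOopen (c.2.1 j)).measurableSet.compl))
  have hRefm : ∀ c, MeasurableSet (Ref c) := by
    intro c
    have heq : Ref c = ⋂ j, {ω | fiber ((E ∩ Prod.snd ⁻¹' (⋃ k ∈ c.2.1 j, b k)) ∩
        {p : Ω × X | p.2 ∈ dynCover T θ E U n p.1 (c.2.2 j)}ᶜ) ω = ∅} := by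
      ext ω
      rw [hRef]
      simp only [mem_setOf_eq, mem_iInter, eq_empty_iff_forall_notMem]
      constructor
      · rintro h j x ⟨⟨hxE, hxO⟩, hxD⟩
        exact hxD (h j ⟨hxO, hxE⟩)
      · rintro h j x ⟨hxO, hxE⟩
        by_contra hxD
        exact h j x ⟨⟨hxE, hxO⟩, hxD⟩
    rw [heq]
    exact MeasurableSet.iInter fun j => hprojc _
      ((hE.inter (measurable_snd (hOopen (c.2.1 j)).measurableSet)).inter (hDC (c.2.2 j)).compl)
  have hOrdm : ∀ c q, MeasurableSet (Ord c q) := by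
    intro c q
    set Z : Set X := {x | q + 2 ≤ Nat.card {j // x ∈ ⋃ k ∈ c.2.1 j, b k}} with hZ
    have hZm : MeasurableSet Z := by
      have heq : Z = ⋃ (J : Finset (Fin c.1)) (_ : J.card = q + 2),
          ⋂ j ∈ J, ⋃ k ∈ c.2.1 j, b k := by
        ext x
        rw [hZ]
        simp only [mem_setOf_eq, mem_iUnion, mem_iInter]
        constructor
        · intro h
          rw [Nat.card_eq_fintype_card, Fintype.card_subtype] at h
          obtain ⟨J, hJsub, hJcard⟩ := Finset.exists_subset_card_eq h
          exact ⟨J, hJcard, fun j hj => (Finset.mem_filter.mp (hJsub hj)).2⟩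
        · rintro ⟨J, hJcard, hJ⟩
          rw [Nat.card_eq_fintype_card, Fintype.card_subtype, ← hJcard]
          apply Finset.card_le_card
          intro j hj
          exact Finset.mem_filter.mpr ⟨Finset.mem_univ j, hJ j hj⟩
      rw [heq]
      exact MeasurableSet.iUnion fun J => MeasurableSet.iUnion fun _ =>
        MeasurableSet.iInter fun j => MeasurableSet.iInter fun _ =>
          (hOopen (c.2.1 j)).measurableSet
    have heq : Ord c q = {ω | fiber (E ∩ Prod.snd ⁻¹' Z) ω = ∅} := by
      ext ω
      rw [hOrd, hZ]
      simp only [mem_setOf_eq, eq_empty_iff_forall_notMem]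
      constructor
      · rintro h x ⟨hxE, hxZ⟩
        have h1 := h x hxE
        have h2 : q + 2 ≤ Nat.card {j // x ∈ ⋃ k ∈ c.2.1 j, b k} := hxZ
        omega
      · intro h x hx
        by_contra hcard
        exact h x ⟨hx, show q + 2 ≤ Nat.card {j // x ∈ ⋃ k ∈ c.2.1 j, b k} by omega⟩
    rw [heq]
    exact hprojc _ (hE.inter (measurable_snd hZm))
  set R : ℕ → Set Ω := fun q =>
    ⋃ c : (Σ m : ℕ, (Fin m → Finset ℕ) × (Fin m → Fin n → Fin l)),
      (Cov c ∩ Ref c ∩ Ord c q) with hR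
  have hRm : ∀ q, MeasurableSet (R q) :=
    fun q => MeasurableSet.iUnion fun c => ((hCovm c).inter (hRefm c)).inter (hOrdm c q)
  -- the bad set
  have hae : ∀ᵐ ω ∂P, MapsTo (T ω) (fiber E ω) (fiber E (θ ω)) ∧
      ContinuousOn (T ω) (fiber E ω) := hTmap.and hTc
  have hbad0 : P {ω | ¬(MapsTo (T ω) (fiber E ω) (fiber E (θ ω)) ∧
      ContinuousOn (T ω) (fiber E ω))} = 0 := ae_iff.mp hae
  set Nb := toMeasurable P {ω | ¬(MapsTo (T ω) (fiber E ω) (fiber E (θ ω)) ∧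
      ContinuousOn (T ω) (fiber E ω))} with hNb
  have hNb0 : P Nb = 0 := by rw [hNb, measure_toMeasurable]; exact hbad0
  set GB := ⋃ i : ℕ, θ^[i] ⁻¹' Nb with hGB
  have hGB0 : P GB = 0 := measure_iUnion_null fun i => by
    rw [(hθ.iterate i).measure_preimage (measurableSet_toMeasurable P _).nullMeasurableSet]
    exact hNb0
  have hgood : ∀ ω, ω ∉ GB → ∀ i : ℕ,
      MapsTo (T (θ^[i] ω)) (fiber E (θ^[i] ω)) (fiber E (θ (θ^[i] ω))) ∧
      ContinuousOn (T (θ^[i] ω)) (fiber E (θ^[i] ω)) := by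
    intro ω hω i
    have h1 : θ^[i] ω ∉ Nb := fun h => hω (mem_iUnion.mpr ⟨i, h⟩)
    have h2 : θ^[i] ω ∉ {ω | ¬(MapsTo (T ω) (fiber E ω) (fiber E (θ ω)) ∧
        ContinuousOn (T ω) (fiber E ω))} := fun h => h1 (subset_toMeasurable P _ h)
    exact not_not.mp h2
  -- level sets are measurable
  have hL : ∀ q : ℕ, MeasurableSet {ω | DOn (fiber E ω) (dynCover T θ E U n ω) ≤ q} := by
    intro q
    have hsub1 : R q ⊆ {ω | DOn (fiber E ω) (dynCover T θ E U n ω) ≤ q} := by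
      intro ω hω
      rw [hR] at hω
      obtain ⟨c, ⟨hcov, href⟩, hord⟩ := mem_iUnion.mp hω
      exact aux_DOn_le (hEne ω) (fun j => ⋃ k ∈ c.2.1 j, b k)
        (fun j => hOopen (c.2.1 j)) c.2.2 hcov href hord
    have hsub2 : {ω | DOn (fiber E ω) (dynCover T θ E U n ω) ≤ q} \ GB ⊆ R q := by
      rintro ω ⟨hfq, hgb⟩
      have hg := hgood ω hgb
      obtain ⟨m, F, tg, h1, h2, h3⟩ := aux_le_DOn (hEcp ω)
        (aux_dynCover_relopen hU.1 (fun i => (hg i).1) (fun i => (hg i).2))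
        (aux_dynCover_covers hU (fun i => (hg i).1)) hbopen hbasis hfq
      exact mem_iUnion.mpr ⟨⟨m, F, tg⟩, ⟨h1, h2⟩, h3⟩
    have heq : {ω | DOn (fiber E ω) (dynCover T θ E U n ω) ≤ q} =
        R q ∪ ({ω | DOn (fiber E ω) (dynCover T θ E U n ω) ≤ q} ∩ GB) := by
      apply Subset.antisymm
      · intro ω hω
        by_cases hgb : ω ∈ GB
        · exact Or.inr ⟨hω, hgb⟩
        · exact Or.inl (hsub2 ⟨hω, hgb⟩)
      · rintro ω (hω | hω)
        · exact hsub1 hω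
        · exact hω.1
    rw [heq]
    exact (hRm q).union (measurableSet_of_null (measure_mono_null inter_subset_right hGB0))
  -- conclude
  apply measurable_to_countable'
  intro q
  cases q with
  | zero =>
    have heq : (fun ω => DOn (fiber E ω) (dynCover T θ E U n ω)) ⁻¹' {0} =
        {ω | DOn (fiber E ω) (dynCover T θ E U n ω) ≤ 0} := by
      ext ω; simp [Nat.le_zero]
    rw [heq]; exact hL 0
  | succ q =>
    have heq : (fun ω => DOn (fiber E ω) (dynCover T θ E U n ω)) ⁻¹' {q + 1} =
        {ω | DOn (fiber E ω) (dynCover T θ E U n ω) ≤ q + 1} \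
        {ω | DOn (fiber E ω) (dynCover T θ E U n ω) ≤ q} := by
      ext ω
      simp only [mem_preimage, mem_singleton_iff, mem_diff, mem_setOf_eq]
      omega
    rw [heq]; exact (hL (q + 1)).diff (hL q)
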